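/- In the integral group ring ℤ[Q_28], the right annihilator of x^3 − x − 1 is zero: for every b ∈ ℤ[Q_28], if (x^3 − x − 1)*b = 0 then b = 0. -/

import Mathlib

open Polynomial in
theorem stmt_8 :
    let x : MonoidAlgebra ℤ (QuaternionGroup 7) :=
      MonoidAlgebra.of ℤ (QuaternionGroup 7) (QuaternionGroup.a 1)
    ∀ b : MonoidAlgebra ℤ (QuaternionGroup 7), (x ^ 3 - x - 1) * b = 0 → b = 0 := by
  intro x b hb
  have hx : x ^ 14 = 1 := by
    show (MonoidAlgebra.of ℤ (QuaternionGroup 7) (QuaternionGroup.a 1)) ^ 14 = 1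
    rw [← map_pow, QuaternionGroup.a_one_pow]
    have h14 : ((14 : ℕ) : ZMod (2 * 7)) = 0 := by decide
    rw [h14, ← QuaternionGroup.one_def, map_one]
  have hP : ((-1 - X^2 - X^5 + X^6 - X^7 + X^9 - 2*X^10 + 2*X^11 - X^12 - X^13) *
      (X ^ 3 - X - 1) : Polynomial ℤ) = 4 + (3 - X - X^2) * (X^14 - 1) := by ring
  have key := congrArg (Polynomial.aeval x) hP
  simp only [map_mul, map_add, map_sub, map_pow, map_one, map_neg, map_ofNat,
    Polynomial.aeval_X, hx, sub_self, mul_zero, add_zero] at key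
  have h4 : (4 : MonoidAlgebra ℤ (QuaternionGroup 7)) * b = 0 := by
    rw [← key, mul_assoc, hb, mul_zero]
  have h5 : (4 : ℤ) • b = 0 := by
    rw [← h4]
    rw [show ((4:ℤ) • b) = ((4:ℤ) • (1 : MonoidAlgebra ℤ (QuaternionGroup 7))) * b by
      rw [smul_mul_assoc, one_mul]]
    norm_num
  haveI : Module.IsTorsionFree ℤ (MonoidAlgebra ℤ (QuaternionGroup 7)) :=
    inferInstance
  rcases smul_eq_zero.mp h5 with h | h
  · norm_num at h
  · exact h
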